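/- Let q ≥ 1 and let d : {1,...,q} → {0,1} be a sequence of binary digits. Set t = ∑_{j=1}^q d_j · 2^{-j}. Then ∑_{i=0}^{q-1} {2^i t} = (∑_{j=1}^q d_j) - t, where {x} denotes the fractional part of x. -/

import Mathlib

open Finset

lemma geom_tail (a b : ℕ) (h : a ≤ b) :
    ∑ j ∈ Finset.Ioc a b, (2:ℝ)⁻¹ ^ j = 2⁻¹ ^ a - 2⁻¹ ^ b := by
  induction b with
  | zero => obtain rfl := Nat.le_zero.mp h; simp
  | succ n ih =>
    rcases eq_or_lt_of_le h with rfl | h'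
    · simp
    · have ha : a ≤ n := Nat.lt_succ_iff.mp h'
      rw [Finset.sum_Ioc_succ_top (by omega), ih ha, pow_succ]
      ring

theorem stmt_1 (q : ℕ) (hq : 1 ≤ q) (d : ℕ → ℕ) (hd : ∀ j, d j = 0 ∨ d j = 1)
    (t : ℝ) (ht : t = ∑ j ∈ Finset.Icc 1 q, (d j : ℝ) * (2 : ℝ)⁻¹ ^ j) :
    ∑ i ∈ Finset.range q, Int.fract ((2 : ℝ) ^ i * t)
      = (∑ j ∈ Finset.Icc 1 q, (d j : ℝ)) - t := by
  have hd1 : ∀ j, (d j : ℝ) ≤ 1 := fun j => by rcases hd j with h | h <;> simp [h]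
  have hIcc : Finset.Icc 1 q = Finset.Ioc 0 q := by
    ext x; simp [Nat.lt_iff_add_one_le]
  have key : ∀ i < q, Int.fract ((2:ℝ)^i * t)
      = ∑ j ∈ Finset.Ioc i q, (d j : ℝ) * ((2:ℝ)^i * (2:ℝ)⁻¹^j) := by
    intro i hi
    have hint : ∑ j ∈ Finset.Ioc 0 i, (d j:ℝ) * ((2:ℝ)^i * (2:ℝ)⁻¹^j)
        = ((∑ j ∈ Finset.Ioc 0 i, d j * 2^(i-j) : ℕ) : ℝ) := by
      push_cast
      refine Finset.sum_congr rfl fun j hj => ?_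
      have hj' : j ≤ i := (Finset.mem_Ioc.mp hj).2
      have : (2:ℝ)^i = 2^(i-j) * 2^j := by
        rw [← pow_add, Nat.sub_add_cancel hj']
      rw [this, inv_pow]
      field_simp
    have hsplit : (2:ℝ)^i * t
        = ∑ j ∈ Finset.Ioc 0 i, (d j:ℝ) * ((2:ℝ)^i * (2:ℝ)⁻¹^j)
          + ∑ j ∈ Finset.Ioc i q, (d j:ℝ) * ((2:ℝ)^i * (2:ℝ)⁻¹^j) := by
      rw [ht, hIcc, Finset.mul_sum,
        ← Finset.sum_Ioc_consecutive _ (Nat.zero_le i) hi.le]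
      congr 1 <;> exact Finset.sum_congr rfl fun j _ => by ring
    have hT0 : 0 ≤ ∑ j ∈ Finset.Ioc i q, (d j:ℝ) * ((2:ℝ)^i * (2:ℝ)⁻¹^j) :=
      Finset.sum_nonneg fun j _ => by positivity
    have hT1 : ∑ j ∈ Finset.Ioc i q, (d j:ℝ) * ((2:ℝ)^i * (2:ℝ)⁻¹^j) < 1 := by
      have hle : ∑ j ∈ Finset.Ioc i q, (d j:ℝ) * ((2:ℝ)^i * (2:ℝ)⁻¹^j)
          ≤ ∑ j ∈ Finset.Ioc i q, (2:ℝ)^i * (2:ℝ)⁻¹^j := by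
        refine Finset.sum_le_sum fun j _ => ?_
        have h2 : (0:ℝ) ≤ (2:ℝ)^i * (2:ℝ)⁻¹^j := by positivity
        nlinarith [hd1 j]
      have heq : ∑ j ∈ Finset.Ioc i q, (2:ℝ)^i * (2:ℝ)⁻¹^j
          = (2:ℝ)^i * (2⁻¹^i - 2⁻¹^q) := by
        rw [← Finset.mul_sum, geom_tail i q hi.le]
      have h1 : (2:ℝ)^i * (2:ℝ)⁻¹^i = 1 := by
        rw [← mul_pow]; norm_num
      have hpos : (0:ℝ) < (2:ℝ)^i * (2:ℝ)⁻¹^q := by positivity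
      nlinarith
    rw [hsplit, hint, Int.fract_natCast_add, Int.fract_eq_self.mpr ⟨hT0, hT1⟩]
  rw [Finset.sum_congr rfl fun i hi => key i (Finset.mem_range.mp hi)]
  have hswap : ∀ i ∈ Finset.range q,
      ∑ j ∈ Finset.Ioc i q, (d j : ℝ) * ((2:ℝ)^i * (2:ℝ)⁻¹^j)
        = ∑ j ∈ Finset.Ioc 0 q,
            if i < j then (d j : ℝ) * ((2:ℝ)^i * (2:ℝ)⁻¹^j) else 0 := by
    intro i hi
    rw [← Finset.sum_filter]
    congr 1
    ext j
    simp only [Finset.mem_filter, Finset.mem_Ioc]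
    omega
  rw [Finset.sum_congr rfl hswap, Finset.sum_comm]
  have hinner : ∀ j ∈ Finset.Ioc 0 q,
      ∑ i ∈ Finset.range q,
          (if i < j then (d j : ℝ) * ((2:ℝ)^i * (2:ℝ)⁻¹^j) else 0)
        = (d j : ℝ) - (d j : ℝ) * (2:ℝ)⁻¹^j := by
    intro j hj
    obtain ⟨hj0, hjq⟩ := Finset.mem_Ioc.mp hj
    rw [← Finset.sum_filter]
    have hfil : (Finset.range q).filter (· < j) = Finset.range j := by
      ext i; simp only [Finset.mem_filter, Finset.mem_range]; omega
    rw [hfil]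
    have h1 : ∑ i ∈ Finset.range j, (d j:ℝ) * ((2:ℝ)^i * (2:ℝ)⁻¹^j)
        = (d j:ℝ) * (2:ℝ)⁻¹^j * ∑ i ∈ Finset.range j, (2:ℝ)^i := by
      rw [Finset.mul_sum]
      exact Finset.sum_congr rfl fun i _ => by ring
    have h2 : ∑ i ∈ Finset.range j, (2:ℝ)^i = 2^j - 1 := by
      have := geom_sum_eq (by norm_num : (2:ℝ) ≠ 1) j
      rw [this]; norm_num
    have h3 : (2:ℝ)⁻¹^j * 2^j = 1 := by rw [← mul_pow]; norm_num
    rw [h1, h2]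
    nlinarith [h3]
  rw [Finset.sum_congr rfl hinner, Finset.sum_sub_distrib, hIcc, ht, hIcc]
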